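/- Let G be a unit-disk graph on a finite point set V ⊆ ℝ² (u, v adjacent iff ‖u − v‖ ≤ 1). Let g be a point of the plane, and let u, v ∈ V each be incident to an edge of G that intersects a fixed axis-aligned square cell C of side length c = √15/10. Then the hop-distance from u to v in G is at most 3. -/
import Mathlib

open scoped RealInnerProductSpace

/-- Nearest-endpoint inequality: if `p` lies on a segment `[a,b]` of length `≤ 1`,
then some endpoint `e ∈ {a,b}` satisfies `‖q - e‖² ≤ ‖q - p‖² + 1/4`. -/
lemma key_ineq {E : Type*} [NormedAddCommGroup E] [InnerProductSpace ℝ E]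
    (a b q p : E) (hab : ‖b - a‖ ≤ 1) (hp : p ∈ segment ℝ a b) :
    ‖q - a‖ ^ 2 ≤ ‖q - p‖ ^ 2 + 1/4 ∨ ‖q - b‖ ^ 2 ≤ ‖q - p‖ ^ 2 + 1/4 := by
  obtain ⟨α, t, hα, ht, hαt, rfl⟩ := hp
  have hα' : α = 1 - t := by linarith
  subst hα'
  have ht1 : t ≤ 1 := by linarith
  have hqp : q - ((1 - t) • a + t • b) = (q - a) - t • (b - a) := by module
  have hqb : q - b = (q - a) - (1:ℝ) • (b - a) := by module
  rw [hqp, hqb]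
  set A := q - a with hA
  set d := b - a with hd
  have hL : ‖d‖ ^ 2 ≤ 1 := by nlinarith [norm_nonneg d]
  have e1 : ‖A - t • d‖ ^ 2 = ‖A‖^2 - 2 * t * ⟪A, d⟫ + t^2 * ‖d‖^2 := by
    rw [norm_sub_sq_real, real_inner_smul_right, norm_smul, Real.norm_eq_abs,
      abs_of_nonneg ht]
    ring
  have e2 : ‖A - (1:ℝ) • d‖ ^ 2 = ‖A‖^2 - 2 * ⟪A, d⟫ + ‖d‖^2 := by
    rw [norm_sub_sq_real, real_inner_smul_right, norm_smul, Real.norm_eq_abs]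
    simp
  by_cases hs : 2 * ⟪A, d⟫ ≤ ‖d‖ ^ 2
  · left
    rw [e1]
    nlinarith [mul_le_mul_of_nonneg_left hs ht, sq_nonneg (2*t - 1), sq_nonneg t,
      mul_nonneg (mul_nonneg ht (sub_nonneg.2 ht1)) (sq_nonneg ‖d‖)]
  · right
    rw [e1, e2]
    push_neg at hs
    nlinarith [mul_le_mul_of_nonneg_left hs.le (sub_nonneg.2 ht1), sq_nonneg (2*t-1)]

/-- Same inequality phrased with `dist`. -/
lemma key_dist {E : Type*} [NormedAddCommGroup E] [InnerProductSpace ℝ E]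
    (a b q p : E) (hab : dist a b ≤ 1) (hp : p ∈ segment ℝ a b) :
    dist q a ^ 2 ≤ dist q p ^ 2 + 1/4 ∨ dist q b ^ 2 ≤ dist q p ^ 2 + 1/4 := by
  have hab' : ‖b - a‖ ≤ 1 := by rwa [← dist_eq_norm, dist_comm]
  simpa [dist_eq_norm] using key_ineq a b q p hab' hp

/-- A short walk between vertices at distance ≤ 1 in a unit-disk graph. -/
lemma walk_of_dist {V : Finset (EuclideanSpace ℝ (Fin 2))} (G : SimpleGraph V)
    (hG : ∀ a b : V, G.Adj a b ↔ a ≠ b ∧ dist (a : EuclideanSpace ℝ (Fin 2)) b ≤ 1)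
    (a b : V) (h : dist (a : EuclideanSpace ℝ (Fin 2)) b ≤ 1) :
    ∃ w : G.Walk a b, w.length ≤ 1 := by
  by_cases hab : a = b
  · subst hab; exact ⟨.nil, by simp⟩
  · exact ⟨.cons ((hG a b).mpr ⟨hab, h⟩) .nil, by simp⟩

/-- In a unit-disk graph on a finite point set `V ⊆ ℝ²`, if `u` and `v` are
each incident to an edge intersecting a fixed axis-aligned square cell `C` of side
`c = √15/10`, then the hop-distance from `u` to `v` is at most `3`. -/
theorem stmt_6 (V : Finset (EuclideanSpace ℝ (Fin 2)))
    (G : SimpleGraph V)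
    (hG : ∀ a b : V, G.Adj a b ↔ a ≠ b ∧ dist (a : EuclideanSpace ℝ (Fin 2)) b ≤ 1)
    (c : ℝ) (hc : c = Real.sqrt 15 / 10) (x y : ℝ)
    (C : Set (EuclideanSpace ℝ (Fin 2)))
    (hC : C = {p | p 0 ∈ Set.Icc x (x + c) ∧ p 1 ∈ Set.Icc y (y + c)})
    (u v u' v' : V)
    (hu : G.Adj u u' ∧ (segment ℝ (u : EuclideanSpace ℝ (Fin 2)) u' ∩ C).Nonempty)
    (hv : G.Adj v v' ∧ (segment ℝ (v : EuclideanSpace ℝ (Fin 2)) v' ∩ C).Nonempty) :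
    ∃ w : G.Walk u v, w.length ≤ 3 := by
  obtain ⟨p, hpseg, hpC⟩ := hu.2
  obtain ⟨q, hqseg, hqC⟩ := hv.2
  have hdu : dist (u : EuclideanSpace ℝ (Fin 2)) u' ≤ 1 := ((hG u u').mp hu.1).2
  have hdv : dist (v : EuclideanSpace ℝ (Fin 2)) v' ≤ 1 := ((hG v v').mp hv.1).2
  -- distance between the two cell points
  have hc2 : c ^ 2 = 15/100 := by
    rw [hc]; rw [div_pow, Real.sq_sqrt (by norm_num : (15:ℝ) ≥ 0)]; norm_num
  have hcnn : 0 ≤ c := by rw [hc]; positivity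
  have hpq : dist p q ^ 2 ≤ 3/10 := by
    rw [hC] at hpC hqC
    obtain ⟨⟨h1, h2⟩, h3, h4⟩ := hpC
    obtain ⟨⟨h5, h6⟩, h7, h8⟩ := hqC
    rw [EuclideanSpace.dist_eq, Real.sq_sqrt (by positivity)]
    rw [Fin.sum_univ_two]
    have e0 : dist (p 0) (q 0) ^ 2 ≤ c ^ 2 := by
      rw [Real.dist_eq, sq_abs]; nlinarith
    have e1 : dist (p 1) (q 1) ^ 2 ≤ c ^ 2 := by
      rw [Real.dist_eq, sq_abs]; nlinarith
    nlinarith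
  -- first endpoint selection
  have step1 := key_dist (u : EuclideanSpace ℝ (Fin 2)) u' q p hdu hpseg
  obtain ⟨e, he, hqe⟩ : ∃ e : V, (e = u ∨ e = u') ∧
      dist q (e : EuclideanSpace ℝ (Fin 2)) ^ 2 ≤ 11/20 := by
    rcases step1 with h | h
    · exact ⟨u, Or.inl rfl, by nlinarith [dist_comm q p ▸ hpq]⟩
    · exact ⟨u', Or.inr rfl, by nlinarith [dist_comm q p ▸ hpq]⟩
  -- second endpoint selection
  have step2 := key_dist (v : EuclideanSpace ℝ (Fin 2)) v' (e : EuclideanSpace ℝ (Fin 2)) q hdv hqseg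
  obtain ⟨f, hf, hef⟩ : ∃ f : V, (f = v ∨ f = v') ∧
      dist (e : EuclideanSpace ℝ (Fin 2)) (f : EuclideanSpace ℝ (Fin 2)) ≤ 1 := by
    have hqe' : dist (e : EuclideanSpace ℝ (Fin 2)) q ^ 2 ≤ 11/20 := by
      rwa [dist_comm]
    rcases step2 with h | h
    · refine ⟨v, Or.inl rfl, ?_⟩
      nlinarith [dist_nonneg (x := (e : EuclideanSpace ℝ (Fin 2))) (y := (v : EuclideanSpace ℝ (Fin 2)))]
    · refine ⟨v', Or.inr rfl, ?_⟩
      nlinarith [dist_nonneg (x := (e : EuclideanSpace ℝ (Fin 2))) (y := (v' : EuclideanSpace ℝ (Fin 2)))]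
  -- assemble the walk
  have hue : dist (u : EuclideanSpace ℝ (Fin 2)) e ≤ 1 := by
    rcases he with rfl | rfl
    · simp
    · exact hdu
  have hfv : dist (f : EuclideanSpace ℝ (Fin 2)) v ≤ 1 := by
    rcases hf with rfl | rfl
    · simp
    · rwa [dist_comm]
  obtain ⟨w1, hw1⟩ := walk_of_dist G hG u e hue
  obtain ⟨w2, hw2⟩ := walk_of_dist G hG e f hef
  obtain ⟨w3, hw3⟩ := walk_of_dist G hG f v hfv
  exact ⟨w1.append (w2.append w3), by
    simp only [SimpleGraph.Walk.length_append]; omega⟩
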